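/- arXiv:1008.2292 — 9 statements merged into one kernel-verified Lean document; each statement's English description precedes it below -/
import Mathlib

section
/- For any t_1, …, t_d ∈ [0,∞) one has E[exp(−∑_{i=1}^d J_{t_i})] ≥ ∏_{i=1}^d E[exp(−J_{t_i})]; equivalently, the dependence function ∏_{i=1}^d ψ_{J_{t_{(i)}} − J_{t_{(i−1)}}}(d−i+1) / ψ_{J_{t_{(i)}}}(1) is at least 1, where t_{(1)} ≤ … ≤ t_{(d)} are the increasing order statistics of t_1, …, t_d and t_{(0)} := 0. -/
open MeasureTheory ProbabilityTheory

private lemma sibuya_aux {Ω : Type*} [MeasurableSpace Ω] (P : Measure Ω) [IsProbabilityMeasure P]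
    (J : NNReal → Ω → ℝ)
    (hJmeas : ∀ t, Measurable (J t))
    (hJ0 : ∀ ω, J 0 ω = 0)
    (hJmono : ∀ ω, Monotone (fun t => J t ω))
    (hJindep : ∀ (n : ℕ) (s : Fin (n + 1) → NNReal), Monotone s → s 0 = 0 →
      iIndepFun
        (fun i : Fin n => fun ω => J (s i.succ) ω - J (s i.castSucc) ω) P)
    (n : ℕ) (u : Fin (n + 1) → NNReal) (hu : Monotone u) :
    ∏ i : Fin (n + 1), ∫ ω, Real.exp (-J (u i) ω) ∂P
      ≤ ∫ ω, Real.exp (-∑ i : Fin (n + 1), J (u i) ω) ∂P := by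
  classical
  set s : Fin (n + 2) → NNReal := Fin.cons 0 u with hs_def
  have hs0 : s 0 = 0 := rfl
  have hs : Monotone s := by
    rw [Fin.monotone_iff_le_succ]
    intro i
    induction i using Fin.cases with
    | zero =>
        simp only [Fin.castSucc_zero, hs0, Fin.succ_zero_eq_one]
        exact zero_le
    | succ j =>
        rw [← Fin.succ_castSucc]
        simp only [hs_def, Fin.cons_succ]
        exact hu (Fin.castSucc_le_succ j)
  -- the increments
  set Δ : Fin (n + 1) → Ω → ℝ :=
    fun i ω => J (s i.succ) ω - J (s i.castSucc) ω with hΔ_def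
  have hΔmeas : ∀ i, Measurable (Δ i) := fun i => (hJmeas _).sub (hJmeas _)
  have hΔnonneg : ∀ i ω, 0 ≤ Δ i ω := fun i ω =>
    sub_nonneg.2 (hJmono ω (hs (Fin.castSucc_le_succ i)))
  have hΔindep : iIndepFun Δ P := hJindep (n + 1) s hs hs0
  -- telescoping
  have hT : ∀ (i : Fin (n + 1)) (ω : Ω), J (u i) ω = ∑ j ∈ Finset.Iic i, Δ j ω := by
    intro i ω
    induction i using Fin.induction with
    | zero =>
        have : Finset.Iic (0 : Fin (n + 1)) = {0} := by
          ext j; simp only [Finset.mem_Iic, Finset.mem_singleton, Fin.le_def, Fin.ext_iff, Fin.val_zero]; omega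
        rw [this, Finset.sum_singleton]
        simp only [hΔ_def, hs_def, Fin.cons_succ, Fin.castSucc_zero, Fin.cons_zero]
        rw [hJ0, sub_zero]
    | succ i ih =>
        have hins : Finset.Iic i.succ = insert i.succ (Finset.Iic i.castSucc) := by
          ext j
          simp only [Finset.mem_Iic, Finset.mem_insert, Fin.le_def, Fin.ext_iff,
            Fin.val_succ, Fin.coe_castSucc]
          omega
        have hnot : i.succ ∉ Finset.Iic i.castSucc := by
          simp [Finset.mem_Iic, Fin.le_def]
        rw [hins, Finset.sum_insert hnot, ← ih]
        have h1 : s i.succ.succ = u i.succ := by simp [hs_def]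
        have h2 : s i.succ.castSucc = u i.castSucc := by
          rw [← Fin.succ_castSucc]; simp [hs_def]
        simp only [hΔ_def, h1, h2]
        ring
  -- the Laplace transforms of the increments
  set ψ : Fin (n + 1) → ℝ := fun j => ∫ ω, Real.exp (-Δ j ω) ∂P with hψ_def
  have hψnonneg : ∀ j, 0 ≤ ψ j := fun j =>
    integral_nonneg fun ω => (Real.exp_pos _).le
  have hmgf : ∀ (X : Ω → ℝ), mgf X P (-1) = ∫ ω, Real.exp (-X ω) ∂P := by
    intro X; unfold mgf; simp [neg_one_mul]
  -- RHS factorization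
  have hRHS : ∀ i : Fin (n + 1),
      ∫ ω, Real.exp (-J (u i) ω) ∂P = ∏ j ∈ Finset.Iic i, ψ j := by
    intro i
    have h1 : ∫ ω, Real.exp (-J (u i) ω) ∂P
        = mgf (∑ j ∈ Finset.Iic i, Δ j) P (-1) := by
      rw [hmgf]
      congr 1; ext ω
      rw [hT i ω]
      simp [Finset.sum_apply]
    rw [h1, hΔindep.mgf_sum hΔmeas]
    exact Finset.prod_congr rfl fun j _ => hmgf (Δ j)
  -- scaled increments
  set c : Fin (n + 1) → ℕ := fun j => n + 1 - (j : ℕ) with hc_def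
  set X : Fin (n + 1) → Ω → ℝ := fun j ω => (c j : ℝ) * Δ j ω with hX_def
  have hXmeas : ∀ j, Measurable (X j) := fun j => (hΔmeas j).const_mul _
  have hXindep : iIndepFun X P := by
    have := hΔindep.comp (fun j (x : ℝ) => (c j : ℝ) * x)
      (fun j => measurable_id.const_mul _)
    exact this
  -- LHS factorization
  have hsum : ∀ ω, ∑ i : Fin (n + 1), J (u i) ω = ∑ j : Fin (n + 1), X j ω := by
    intro ω
    calc ∑ i : Fin (n + 1), J (u i) ω
        = ∑ i : Fin (n + 1), ∑ j ∈ Finset.Iic i, Δ j ω := by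
          exact Finset.sum_congr rfl fun i _ => hT i ω
      _ = ∑ j : Fin (n + 1), ∑ _i ∈ Finset.Ici j, Δ j ω := by
          refine Finset.sum_comm' fun i j => ?_
          simp [Finset.mem_Iic, Finset.mem_Ici, and_comm]
      _ = ∑ j : Fin (n + 1), X j ω := by
          refine Finset.sum_congr rfl fun j _ => ?_
          rw [Finset.sum_const, Fin.card_Ici, nsmul_eq_mul]
  have hLHS : ∫ ω, Real.exp (-∑ i : Fin (n + 1), J (u i) ω) ∂P
      = ∏ j : Fin (n + 1), ∫ ω, Real.exp (-X j ω) ∂P := by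
    have h1 : ∫ ω, Real.exp (-∑ i : Fin (n + 1), J (u i) ω) ∂P
        = mgf (∑ j : Fin (n + 1), X j) P (-1) := by
      rw [hmgf]
      congr 1; ext ω
      rw [hsum ω]
      simp [Finset.sum_apply]
    rw [h1, hXindep.mgf_sum hXmeas]
    exact Finset.prod_congr rfl fun j _ => hmgf (X j)
  -- RHS rearrangement
  have hRHS2 : ∏ i : Fin (n + 1), ∫ ω, Real.exp (-J (u i) ω) ∂P
      = ∏ j : Fin (n + 1), ψ j ^ c j := by
    calc ∏ i : Fin (n + 1), ∫ ω, Real.exp (-J (u i) ω) ∂P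
        = ∏ i : Fin (n + 1), ∏ j ∈ Finset.Iic i, ψ j :=
          Finset.prod_congr rfl fun i _ => hRHS i
      _ = ∏ j : Fin (n + 1), ∏ _i ∈ Finset.Ici j, ψ j := by
          refine Finset.prod_comm' fun i j => ?_
          simp [Finset.mem_Iic, Finset.mem_Ici, and_comm]
      _ = ∏ j : Fin (n + 1), ψ j ^ c j := by
          refine Finset.prod_congr rfl fun j _ => ?_
          rw [Finset.prod_const, Fin.card_Ici]
  -- Jensen for each factor
  have hJensen : ∀ j : Fin (n + 1), ψ j ^ c j ≤ ∫ ω, Real.exp (-X j ω) ∂P := by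
    intro j
    have hexp : ∀ ω, Real.exp (-X j ω) = Real.exp (-Δ j ω) ^ c j := by
      intro ω
      rw [hX_def]
      rw [show -((c j : ℝ) * Δ j ω) = (c j : ℝ) * (-Δ j ω) by ring, Real.exp_nat_mul]
    have hf_int : Integrable (fun ω => Real.exp (-Δ j ω)) P := by
      refine Integrable.mono' (integrable_const 1) ?_ ?_
      · exact ((hΔmeas j).neg.exp).aestronglyMeasurable
      · refine Filter.Eventually.of_forall fun ω => ?_
        rw [Real.norm_eq_abs, Real.abs_exp]
        exact Real.exp_le_one_iff.2 (neg_nonpos.2 (hΔnonneg j ω))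
    have hgf_int : Integrable (fun ω => Real.exp (-Δ j ω) ^ c j) P := by
      refine Integrable.mono' (integrable_const 1) ?_ ?_
      · exact (((hΔmeas j).neg.exp).pow_const _).aestronglyMeasurable
      · refine Filter.Eventually.of_forall fun ω => ?_
        rw [Real.norm_eq_abs, abs_pow, Real.abs_exp]
        exact pow_le_one₀ (Real.exp_pos _).le
          (Real.exp_le_one_iff.2 (neg_nonpos.2 (hΔnonneg j ω)))
    have hjen := (convexOn_pow (𝕜 := ℝ) (c j)).map_integral_le
      (continuous_pow (c j)).continuousOn isClosed_Ici
      (Filter.Eventually.of_forall fun ω => Set.mem_Ici.2 (Real.exp_pos _).le)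
      hf_int hgf_int
    calc ψ j ^ c j ≤ ∫ ω, Real.exp (-Δ j ω) ^ c j ∂P := hjen
      _ = ∫ ω, Real.exp (-X j ω) ∂P := by
          exact integral_congr_ae (Filter.Eventually.of_forall fun ω => (hexp ω).symm)
  rw [hLHS, hRHS2]
  exact Finset.prod_le_prod (fun j _ => pow_nonneg (hψnonneg j) _) fun j _ => hJensen j

/-- Let `J = (J_t)_{t ≥ 0}` be a nonnegative stochastic process with `J_0 = 0`,
nondecreasing right-continuous sample paths, and independent increments.  For any times
`t_1, …, t_d ≥ 0`,
`E[exp(−∑_{i=1}^d J_{t_i})] ≥ ∏_{i=1}^d E[exp(−J_{t_i})]`,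
i.e. the dependence function of the Sibuya copula is at least `1`. -/
theorem expectation_exp_neg_sum_ge_prod
    {Ω : Type*} [MeasurableSpace Ω] (P : Measure Ω) [IsProbabilityMeasure P]
    (J : NNReal → Ω → ℝ)
    (hJmeas : ∀ t, Measurable (J t))
    (hJ0 : ∀ ω, J 0 ω = 0)
    (hJnonneg : ∀ t ω, 0 ≤ J t ω)
    (hJmono : ∀ ω, Monotone (fun t => J t ω))
    (hJrc : ∀ ω t, ContinuousWithinAt (fun s => J s ω) (Set.Ici t) t)
    (hJindep : ∀ (n : ℕ) (s : Fin (n + 1) → NNReal), Monotone s → s 0 = 0 →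
      iIndepFun
        (fun i : Fin n => fun ω => J (s i.succ) ω - J (s i.castSucc) ω) P)
    (d : ℕ) (t : Fin d → NNReal) :
    ∫ ω, Real.exp (-∑ i : Fin d, J (t i) ω) ∂P
      ≥ ∏ i : Fin d, ∫ ω, Real.exp (-J (t i) ω) ∂P := by
  revert t
  cases d with
  | zero =>
      intro t
      simp
  | succ n =>
      intro t
      set σ := Tuple.sort t with hσ
      set u : Fin (n + 1) → NNReal := t ∘ σ with hu_def
      have hu : Monotone u := Tuple.monotone_sort t
      have h1 : ∀ ω, ∑ i : Fin (n + 1), J (t i) ω = ∑ i : Fin (n + 1), J (u i) ω :=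
        fun ω => (Equiv.sum_comp σ fun i => J (t i) ω).symm
      have h2 : ∏ i : Fin (n + 1), ∫ ω, Real.exp (-J (t i) ω) ∂P
          = ∏ i : Fin (n + 1), ∫ ω, Real.exp (-J (u i) ω) ∂P :=
        (Equiv.prod_comp σ fun i => ∫ ω, Real.exp (-J (t i) ω) ∂P).symm
      rw [ge_iff_le, h2]
      simp only [h1]
      exact sibuya_aux P J hJmeas hJ0 hJmono hJindep n u hu
end

section
/- Define the jointure function φ(x, y, z) := exp(−z(1 − e^{−xy} − x(1 − e^{−y}))) for x, y, z ∈ [0,∞). For every u ∈ (0,1]^d, writing w_j := −(λ/λ_j) log u_j with increasing order statistics w_{(1)} ≤ … ≤ w_{(d)} and w_{(0)} := 0, one has ∏_{i=1}^d u_i · φ(d − i + 1, H, w_{(i)} − w_{(i−1)}) = ∏_{i=1}^d u_i · v_{(i)}^{(1−e^{−H})(1−e^{−H(d−i)})} = C(u). -/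
open scoped BigOperators

/-- The Sibuya copula under assumption (A) with parameters `H`, `lam = λ`, `μ₁, …, μ_d`:
`C(u) = ∏_{i=1}^d u_i · v_{(i)}^{(1−e^{−H})(1−e^{−H(d−i)})}`, where `v_j = u_j^{−λ/λ_j}`,
`λ_j = μ_j + λ(1 − e^{−H})`, and `v_{(1)} ≤ … ≤ v_{(d)}` are the increasing order
statistics of `v_1, …, v_d` (obtained via the sorting permutation `Tuple.sort v`). -/
noncomputable def sibuyaA (d : ℕ) (H lam : ℝ) (μ : Fin d → ℝ) (u : Fin d → ℝ) : ℝ :=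
  let v : Fin d → ℝ := fun j => u j ^ (-lam / (μ j + lam * (1 - Real.exp (-H))))
  ∏ i : Fin d,
    u i * v (Tuple.sort v i)
      ^ ((1 - Real.exp (-H)) * (1 - Real.exp (-(((d - 1 - (i : ℕ) : ℕ)) : ℝ) * H)))

/-- The jointure function `φ(x, y, z) = exp(−z(1 − e^{−xy} − x(1 − e^{−y})))`. -/
noncomputable def jointure (x y z : ℝ) : ℝ :=
  Real.exp (-z * (1 - Real.exp (-(x * y)) - x * (1 - Real.exp (-y))))

/-- Abel summation for telescoping products. -/
lemma abel_sum (W a : ℕ → ℝ) (hW : W 0 = 0) (n : ℕ) :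
    ∑ i ∈ Finset.range n, -(W (i + 1) - W i) * a i
      = (∑ i ∈ Finset.range n, W (i + 1) * (a (i + 1) - a i)) - W n * a n := by
  induction n with
  | zero => simp [hW]
  | succ n ih =>
      rw [Finset.sum_range_succ, ih, Finset.sum_range_succ]
      ring

/-- For `u ∈ (0,1]^d`, writing `w_j = −(λ/λ_j) log u_j` with increasing order
statistics `W 1 ≤ … ≤ W d` (convention `W 0 = w_{(0)} := 0`, recorded via a sorting
permutation `σ`), one has
`∏_{i=1}^d u_i · φ(d − i + 1, H, w_{(i)} − w_{(i−1)})
  = ∏_{i=1}^d u_i · v_{(i)}^{(1−e^{−H})(1−e^{−H(d−i)})} = C(u)`,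
where `v_j = u_j^{−λ/λ_j}` (note that `σ` also sorts `v`, since `v_j = exp w_j`). -/
theorem sibuyaA_eq_prod_jointure
    (d : ℕ) (hd : 2 ≤ d) (H lam : ℝ) (hH : 0 < H) (hlam : 0 < lam)
    (μ : Fin d → ℝ) (hμ : ∀ i, 0 ≤ μ i)
    (u : Fin d → ℝ) (hu : ∀ i, 0 < u i ∧ u i ≤ 1)
    (w : Fin d → ℝ)
    (hw : ∀ j, w j = -(lam / (μ j + lam * (1 - Real.exp (-H)))) * Real.log (u j))
    (σ : Equiv.Perm (Fin d)) (hσ : Monotone (w ∘ σ))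
    (W : Fin (d + 1) → ℝ) (hW0 : W 0 = 0) (hWσ : ∀ k : Fin d, W k.succ = w (σ k)) :
    (∏ i : Fin d,
        u i * jointure ((d - (i : ℕ) : ℕ) : ℝ) H (W i.succ - W i.castSucc))
      = (∏ i : Fin d,
          u i * (u (σ i) ^ (-lam / (μ (σ i) + lam * (1 - Real.exp (-H)))))
            ^ ((1 - Real.exp (-H)) * (1 - Real.exp (-(((d - 1 - (i : ℕ) : ℕ)) : ℝ) * H))))
    ∧ (∏ i : Fin d,
          u i * (u (σ i) ^ (-lam / (μ (σ i) + lam * (1 - Real.exp (-H)))))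
            ^ ((1 - Real.exp (-H)) * (1 - Real.exp (-(((d - 1 - (i : ℕ) : ℕ)) : ℝ) * H))))
        = sibuyaA d H lam μ u := by
  set v : Fin d → ℝ := fun j => u j ^ (-lam / (μ j + lam * (1 - Real.exp (-H)))) with hv
  -- v j = exp (w j)
  have hvexp : ∀ j, v j = Real.exp (w j) := by
    intro j
    show u j ^ (-lam / (μ j + lam * (1 - Real.exp (-H)))) = Real.exp (w j)
    rw [Real.rpow_def_of_pos (hu j).1, hw j]
    congr 1
    rw [neg_div]
    ring
  -- the modified cumulative function on ℕ
  set W' : ℕ → ℝ := fun n => if h : n < d + 1 then W ⟨n, h⟩ else 0 with hW'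
  have hW'0 : W' 0 = 0 := by simp [hW', hW0]
  have hW'succ : ∀ i : Fin d, W' (i.val + 1) = W i.succ := by
    intro i
    have h : i.val + 1 < d + 1 := by omega
    simp only [hW', dif_pos h]
    congr 1
  have hW'cast : ∀ i : Fin d, W' i.val = W i.castSucc := by
    intro i
    have h : i.val < d + 1 := by omega
    simp only [hW', dif_pos h]
    congr 1
  set a : ℕ → ℝ := fun n =>
    1 - Real.exp (-(((d : ℝ) - n) * H)) - ((d : ℝ) - n) * (1 - Real.exp (-H)) with ha
  set g : ℕ → ℝ := fun n =>
    W' (n + 1) * ((1 - Real.exp (-H)) * (1 - Real.exp (-((d : ℝ) - 1 - n) * H))) with hg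
  -- first conjunct
  have key1 : (∏ i : Fin d,
        u i * jointure ((d - (i : ℕ) : ℕ) : ℝ) H (W i.succ - W i.castSucc))
      = (∏ i : Fin d,
          u i * (u (σ i) ^ (-lam / (μ (σ i) + lam * (1 - Real.exp (-H)))))
            ^ ((1 - Real.exp (-H)) * (1 - Real.exp (-(((d - 1 - (i : ℕ) : ℕ)) : ℝ) * H)))) := by
    rw [Finset.prod_mul_distrib, Finset.prod_mul_distrib]
    congr 1
    -- left product as exp of a sum
    have hL : (∏ i : Fin d, jointure ((d - (i : ℕ) : ℕ) : ℝ) H (W i.succ - W i.castSucc))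
        = Real.exp (∑ i ∈ Finset.range d, -(W' (i + 1) - W' i) * a i) := by
      rw [← Fin.sum_univ_eq_sum_range (fun i => -(W' (i + 1) - W' i) * a i) d,
        Real.exp_sum]
      refine Finset.prod_congr rfl fun i _ => ?_
      rw [jointure, hW'succ i, hW'cast i]
      congr 1
      rw [ha]
      simp only
      rw [Nat.cast_sub i.isLt.le]
    -- right product as exp of a sum
    have hR : (∏ i : Fin d,
          (u (σ i) ^ (-lam / (μ (σ i) + lam * (1 - Real.exp (-H)))))
            ^ ((1 - Real.exp (-H)) * (1 - Real.exp (-(((d - 1 - (i : ℕ) : ℕ)) : ℝ) * H))))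
        = Real.exp (∑ i ∈ Finset.range d, g i) := by
      rw [← Fin.sum_univ_eq_sum_range g d, Real.exp_sum]
      refine Finset.prod_congr rfl fun i _ => ?_
      have h1 : u (σ i) ^ (-lam / (μ (σ i) + lam * (1 - Real.exp (-H))))
          = Real.exp (w (σ i)) := hvexp (σ i)
      rw [h1, Real.rpow_def_of_pos (Real.exp_pos _), Real.log_exp, hg]
      simp only
      rw [hW'succ i, hWσ i]
      congr 2
      rw [Nat.cast_sub (by omega : i.val ≤ d - 1), Nat.cast_sub (by omega : 1 ≤ d)]
      push_cast
      ring
    rw [hL, hR]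
    congr 1
    rw [abel_sum W' a hW'0 d]
    have had : a d = 0 := by simp [ha]
    rw [had, mul_zero, sub_zero]
    refine Finset.sum_congr rfl fun i _ => ?_
    rw [hg]
    simp only
    congr 1
    rw [ha]
    simp only
    push_cast
    have h1 : -(((d : ℝ) - i) * H) = -(((d : ℝ) - 1 - i) * H) + -H := by ring
    have h2 : -(((d : ℝ) - (i + 1)) * H) = -(((d : ℝ) - 1 - i) * H) := by ring
    rw [h1, h2, Real.exp_add]
    ring
  -- second conjunct
  have hmono : Monotone (v ∘ σ) := by
    have : v ∘ σ = Real.exp ∘ (w ∘ σ) := by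
      funext i; exact hvexp (σ i)
    rw [this]
    exact Real.exp_monotone.comp hσ
  have hsort : v ∘ σ = v ∘ Tuple.sort v := Tuple.comp_sort_eq_comp_iff_monotone.mpr hmono
  have key2 : (∏ i : Fin d,
          u i * (u (σ i) ^ (-lam / (μ (σ i) + lam * (1 - Real.exp (-H)))))
            ^ ((1 - Real.exp (-H)) * (1 - Real.exp (-(((d - 1 - (i : ℕ) : ℕ)) : ℝ) * H))))
        = sibuyaA d H lam μ u := by
    rw [sibuyaA]
    refine Finset.prod_congr rfl fun i _ => ?_
    congr 1
    have : u (σ i) ^ (-lam / (μ (σ i) + lam * (1 - Real.exp (-H)))) = v (σ i) := rfl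
    rw [this, show v (σ i) = v (Tuple.sort v i) from congrFun hsort i]
  exact ⟨key1, key2⟩
end

section
/- For every u ∈ (0,1], the diagonal of the Sibuya copula under assumption (A) satisfies C(u, …, u) = u^{d − λ(1−e^{−H}) ∑_{i=1}^d (1 − e^{−H(d−i)})/λ_{[i]}}, where λ_{[i]} denotes the i-th largest value among λ_1, …, λ_d. -/
open scoped BigOperators

/-- The diagonal of the Sibuya copula under assumption (A):
`C(u, …, u) = u^{d − λ(1−e^{−H}) ∑_{i=1}^d (1 − e^{−H(d−i)})/λ_{[i]}}`, where
`λ_{[i]}` is the `i`-th largest of `λ_1, …, λ_d` (recorded via a permutation `σ` that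
orders `j ↦ λ_j = μ_j + λ(1 − e^{−H})` decreasingly). -/
theorem sibuyaA_diagonal
    (d : ℕ) (hd : 2 ≤ d) (H lam : ℝ) (hH : 0 < H) (hlam : 0 < lam)
    (μ : Fin d → ℝ) (hμ : ∀ i, 0 ≤ μ i)
    (u : ℝ) (hu0 : 0 < u) (hu1 : u ≤ 1)
    (σ : Equiv.Perm (Fin d))
    (hσ : Antitone ((fun j => μ j + lam * (1 - Real.exp (-H))) ∘ σ)) :
    sibuyaA d H lam μ (fun _ => u)
      = u ^ ((d : ℝ) - lam * (1 - Real.exp (-H)) *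
          ∑ i : Fin d, (1 - Real.exp (-(((d - 1 - (i : ℕ) : ℕ)) : ℝ) * H))
            / (μ (σ i) + lam * (1 - Real.exp (-H)))) := by
  have he : 0 < 1 - Real.exp (-H) := by
    have : Real.exp (-H) < 1 := Real.exp_lt_one_iff.mpr (by linarith)
    linarith
  set E : ℝ := 1 - Real.exp (-H) with hE
  set c : Fin d → ℝ := fun i => 1 - Real.exp (-(((d - 1 - (i : ℕ) : ℕ)) : ℝ) * H) with hc
  have hpos : ∀ j, 0 < μ j + lam * E := fun j => by
    have := hμ j; nlinarith
  set v : Fin d → ℝ := fun j => (fun _ : Fin d => u) j ^ (-lam / (μ j + lam * E)) with hv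
  have hvmono : Monotone (v ∘ σ) := by
    intro a b hab
    have hlmb : μ (σ b) + lam * E ≤ μ (σ a) + lam * E := hσ hab
    have hexp : -lam / (μ (σ b) + lam * E) ≤ -lam / (μ (σ a) + lam * E) := by
      rw [div_le_div_iff₀ (hpos _) (hpos _)]
      nlinarith [hpos (σ a), hpos (σ b)]
    exact Real.rpow_le_rpow_of_exponent_ge hu0 hu1 hexp
  have hsort : v ∘ σ = v ∘ Tuple.sort v := Tuple.comp_sort_eq_comp_iff_monotone.mpr hvmono
  have hvs : ∀ i, v (Tuple.sort v i) = v (σ i) := fun i => (congrFun hsort i).symm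
  have key : sibuyaA d H lam μ (fun _ => u)
      = ∏ i : Fin d,
          u ^ (1 + (-lam / (μ (σ i) + lam * E)) * (E * c i)) := by
    rw [sibuyaA]
    refine Finset.prod_congr rfl fun i _ => ?_
    have h1 : v (Tuple.sort v i) = u ^ (-lam / (μ (σ i) + lam * E)) := hvs i
    show u * v (Tuple.sort v i) ^ (E * c i) = _
    rw [h1, ← Real.rpow_mul hu0.le, Real.rpow_add hu0, Real.rpow_one]
  rw [key, ← Real.rpow_sum_of_pos hu0]
  congr 1
  have hterm : ∀ i : Fin d,
      1 + (-lam / (μ (σ i) + lam * E)) * (E * c i)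
        = 1 - lam * E * (c i / (μ (σ i) + lam * E)) := fun i => by
    field_simp [(hpos (σ i)).ne']
    ring
  rw [Finset.sum_congr rfl fun i _ => hterm i, Finset.sum_sub_distrib, Finset.sum_const,
    Finset.card_univ, Fintype.card_fin, nsmul_eq_mul, mul_one, ← Finset.mul_sum]
end

section
/- The Sibuya copula under assumption (A) is positive lower orthant dependent: for every u ∈ (0,1]^d one has C(u) ≥ ∏_{i=1}^d u_i. -/
open scoped BigOperators

/-- The Sibuya copula under assumption (A) is positive lower orthant
dependent: for every `u ∈ (0,1]^d`, `C(u) ≥ ∏_{i=1}^d u_i`. -/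
theorem sibuyaA_positive_lower_orthant_dependent
    (d : ℕ) (hd : 2 ≤ d) (H lam : ℝ) (hH : 0 < H) (hlam : 0 < lam)
    (μ : Fin d → ℝ) (hμ : ∀ i, 0 ≤ μ i)
    (u : Fin d → ℝ) (hu : ∀ i, 0 < u i ∧ u i ≤ 1) :
    sibuyaA d H lam μ u ≥ ∏ i : Fin d, u i := by
  unfold sibuyaA
  have hE : Real.exp (-H) < 1 := by
    rw [Real.exp_lt_one_iff]; linarith
  have hv : ∀ j : Fin d,
      1 ≤ u j ^ (-lam / (μ j + lam * (1 - Real.exp (-H)))) := by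
    intro j
    have hden : 0 < μ j + lam * (1 - Real.exp (-H)) := by
      have := hμ j; nlinarith
    have hexp : -lam / (μ j + lam * (1 - Real.exp (-H))) ≤ 0 :=
      div_nonpos_of_nonpos_of_nonneg (by linarith) hden.le
    exact Real.one_le_rpow_of_pos_of_le_one_of_nonpos (hu j).1 (hu j).2 hexp
  refine Finset.prod_le_prod (fun i _ => (hu i).1.le) (fun i _ => ?_)
  have hpow : 1 ≤ (fun j => u j ^ (-lam / (μ j + lam * (1 - Real.exp (-H)))))
      (Tuple.sort (fun j => u j ^ (-lam / (μ j + lam * (1 - Real.exp (-H))))) i)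
      ^ ((1 - Real.exp (-H)) *
          (1 - Real.exp (-(((d - 1 - (i : ℕ) : ℕ)) : ℝ) * H))) := by
    refine Real.one_le_rpow (hv _) ?_
    have h1 : Real.exp (-(((d - 1 - (i : ℕ) : ℕ)) : ℝ) * H) ≤ 1 := by
      rw [Real.exp_le_one_iff]
      have : (0 : ℝ) ≤ ((d - 1 - (i : ℕ) : ℕ) : ℝ) := Nat.cast_nonneg _
      nlinarith
    nlinarith
  nlinarith [(hu i).1, mul_le_mul_of_nonneg_left hpow (hu i).1.le]
end

section
/- The Sibuya copula under assumption (A) is max-stable: for every u ∈ (0,1]^d and every s ∈ (0,∞), C(u_1^s, …, u_d^s) = C(u_1, …, u_d)^s. -/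
open scoped BigOperators

/-- The Sibuya copula under assumption (A) is max-stable: for every
`u ∈ (0,1]^d` and every `s ∈ (0,∞)`, `C(u_1^s, …, u_d^s) = C(u_1, …, u_d)^s`.
In particular it is an extreme-value copula. -/
theorem sibuyaA_max_stable
    (d : ℕ) (hd : 2 ≤ d) (H lam : ℝ) (hH : 0 < H) (hlam : 0 < lam)
    (μ : Fin d → ℝ) (hμ : ∀ i, 0 ≤ μ i)
    (u : Fin d → ℝ) (hu : ∀ i, 0 < u i ∧ u i ≤ 1)
    (s : ℝ) (hs : 0 < s) :
    sibuyaA d H lam μ (fun i => u i ^ s) = sibuyaA d H lam μ u ^ s := by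
  simp only [sibuyaA]
  set v : Fin d → ℝ := fun j => u j ^ (-lam / (μ j + lam * (1 - Real.exp (-H)))) with hv
  set v' : Fin d → ℝ :=
    fun j => (u j ^ s) ^ (-lam / (μ j + lam * (1 - Real.exp (-H)))) with hv'
  have hvpos : ∀ j, 0 < v j := fun j => Real.rpow_pos_of_pos (hu j).1 _
  have hvs : v' = fun j => v j ^ s := by
    funext j
    simp only [hv', hv]
    rw [← Real.rpow_mul (hu j).1.le, mul_comm, Real.rpow_mul (hu j).1.le]
  have hmono : Monotone (v' ∘ Tuple.sort v) := by
    intro i j hij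
    simp only [Function.comp_apply, hvs]
    exact Real.rpow_le_rpow (hvpos _).le (Tuple.monotone_sort v hij) hs.le
  have hsort : v' ∘ (Tuple.sort v : Equiv.Perm (Fin d)) = v' ∘ Tuple.sort v' :=
    (Tuple.comp_sort_eq_comp_iff_monotone).mpr hmono
  rw [← Real.finset_prod_rpow _ _
    (fun i _ => mul_nonneg (hu i).1.le (Real.rpow_nonneg (hvpos _).le _))]
  refine Finset.prod_congr rfl fun i _ => ?_
  have h1 : v' (Tuple.sort v' i) = v (Tuple.sort v i) ^ s := by
    have h := congrFun hsort i
    simp only [Function.comp_apply] at h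
    rw [← h, hvs]
  rw [show (u ((Tuple.sort v') i) ^ s) ^
        (-lam / (μ ((Tuple.sort v') i) + lam * (1 - Real.exp (-H))))
      = v (Tuple.sort v i) ^ s from h1,
    Real.mul_rpow (hu i).1.le (Real.rpow_nonneg (hvpos _).le _),
    ← Real.rpow_mul (hvpos _).le, mul_comm s, Real.rpow_mul (hvpos _).le]
end

section
/- Fix μ_1, …, μ_d ∈ (0,∞) and u ∈ (0,1]^d. Let H_n → ∞ and λ_n → ∞ be sequences in (0,∞), and let C_{H_n, λ_n} denote the Sibuya copula under assumption (A) with parameters (H_n, λ_n, μ_1, …, μ_d). Then C_{H_n, λ_n}(u) → min{u_1, …, u_d} as n → ∞, i.e., in the limit H ↑ ∞, λ ↑ ∞ the copula becomes the upper Fréchet bound copula M(u) = min_i u_i. -/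
open scoped BigOperators

open Filter Finset

/-- Fix `μ_1, …, μ_d ∈ (0,∞)` and `u ∈ (0,1]^d`.  For sequences
`H_n → ∞` and `λ_n → ∞` in `(0,∞)`, the Sibuya copulas under assumption (A) with parameters
`(H_n, λ_n, μ_1, …, μ_d)` converge to the upper Fréchet bound:
`C_{H_n, λ_n}(u) → min{u_1, …, u_d}` as `n → ∞`. -/
theorem sibuyaA_tendsto_frechet_upper_bound
    (d : ℕ) (hd : 2 ≤ d)
    (μ : Fin d → ℝ) (hμ : ∀ i, 0 < μ i)
    (u : Fin d → ℝ) (hu : ∀ i, 0 < u i ∧ u i ≤ 1)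
    (Hs lams : ℕ → ℝ) (hHpos : ∀ n, 0 < Hs n) (hlampos : ∀ n, 0 < lams n)
    (hH : Tendsto Hs atTop atTop) (hlam : Tendsto lams atTop atTop) :
    Tendsto (fun n => sibuyaA d (Hs n) (lams n) μ u) atTop (nhds (⨅ i, u i)) := by
  have hu0 : ∀ i, 0 < u i := fun i => (hu i).1
  have hu1 : ∀ i, u i ≤ 1 := fun i => (hu i).2
  have hd0 : 0 < d := by omega
  set L : Fin d := ⟨d - 1, by omega⟩ with hLdef
  have hne : (Finset.univ : Finset (Fin d)).Nonempty := ⟨L, mem_univ L⟩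
  haveI : Nonempty (Fin d) := ⟨L⟩
  -- limit data
  set a : Fin d → ℝ := fun j => -Real.log (u j) with ha
  have ha0 : ∀ j, 0 ≤ a j := fun j => neg_nonneg.2 (Real.log_nonpos (hu0 j).le (hu1 j))
  -- t n
  set t : ℕ → ℝ := fun n => 1 - Real.exp (-Hs n) with ht
  have ht0 : ∀ n, 0 < t n := fun n =>
    sub_pos.2 (Real.exp_lt_one_iff.2 (neg_neg_of_pos (hHpos n)))
  have ht1 : ∀ n, t n ≤ 1 := fun n => sub_le_self _ (Real.exp_pos _).le
  have htt : Tendsto t atTop (nhds 1) := by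
    have h2 : Tendsto (fun n => Real.exp (-Hs n)) atTop (nhds 0) :=
      Real.tendsto_exp_atBot.comp (tendsto_neg_atTop_atBot.comp hH)
    simpa using (tendsto_const_nhds (x := (1:ℝ))).sub h2
  -- v, x
  set v : ℕ → Fin d → ℝ :=
    fun n j => u j ^ (-lams n / (μ j + lams n * (1 - Real.exp (-Hs n)))) with hv
  have hden : ∀ n j, 0 < μ j + lams n * (1 - Real.exp (-Hs n)) := fun n j =>
    add_pos (hμ j) (mul_pos (hlampos n) (ht0 n))
  have hvpos : ∀ n j, 0 < v n j := fun n j => Real.rpow_pos_of_pos (hu0 j) _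
  set x : ℕ → Fin d → ℝ := fun n j => Real.log (v n j) with hx
  have hxeq : ∀ n j, x n j = (lams n / (μ j + lams n * (1 - Real.exp (-Hs n)))) * a j := by
    intro n j
    rw [hx, hv]
    simp only
    rw [Real.log_rpow (hu0 j), ha]
    ring
  have hx0 : ∀ n j, 0 ≤ x n j := fun n j => by
    rw [hxeq]
    exact mul_nonneg (div_nonneg (hlampos n).le (hden n j).le) (ha0 j)
  have hxt : ∀ j, Tendsto (fun n => x n j) atTop (nhds (a j)) := by
    intro j
    have hc : Tendsto (fun n => lams n / (μ j + lams n * (1 - Real.exp (-Hs n))))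
        atTop (nhds 1) := by
      have heq : ∀ n, lams n / (μ j + lams n * (1 - Real.exp (-Hs n)))
          = 1 / (μ j / lams n + t n) := by
        intro n
        have h1 : μ j / lams n + t n = (μ j + lams n * (1 - Real.exp (-Hs n))) / lams n := by
          have hl := (hlampos n).ne'
          rw [ht]; field_simp
        rw [h1, one_div_div]
      have h0 : Tendsto (fun n => μ j / lams n) atTop (nhds 0) :=
        tendsto_const_nhds.div_atTop hlam
      have := (tendsto_const_nhds (x := (1:ℝ))).div (h0.add htt) (by norm_num)
      simp only [zero_add, div_one] at this
      exact Tendsto.congr (fun n => (heq n).symm) this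
    have := hc.mul (tendsto_const_nhds (x := a j))
    rw [one_mul] at this
    exact Tendsto.congr (fun n => (hxeq n j).symm) this
  -- sorting facts
  have hmax : ∀ n j, x n j ≤ x n (Tuple.sort (v n) L) := by
    intro n j
    have h1 : v n j ≤ v n (Tuple.sort (v n) L) := by
      have h2 := Tuple.monotone_sort (v n)
        (a := (Tuple.sort (v n)).symm j) (b := L)
        (by rw [Fin.le_def]; exact Nat.le_sub_one_of_lt ((Tuple.sort (v n)).symm j).2)
      simpa using h2
    exact Real.log_le_log (hvpos n j) h1
  have hsup : ∀ n, Finset.univ.sup' hne (x n) = x n (Tuple.sort (v n) L) :=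
    fun n => le_antisymm (Finset.sup'_le _ _ fun j _ => hmax n j)
      (Finset.le_sup' _ (mem_univ _))
  -- exponents
  set e : ℕ → Fin d → ℝ := fun n i =>
    (1 - Real.exp (-Hs n)) * (1 - Real.exp (-(((d - 1 - (i : ℕ) : ℕ)) : ℝ) * Hs n)) with he
  have heL : ∀ n, e n L = 0 := by
    intro n
    rw [he]
    simp [hLdef]
  have he1 : ∀ n i, e n i ≤ 1 := by
    intro n i
    rw [he]
    refine mul_le_one₀ (ht1 n) (sub_nonneg.2 (Real.exp_le_one_iff.2 ?_)) (sub_le_self _ (Real.exp_pos _).le)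
    rw [neg_mul]
    exact neg_nonpos.2 (mul_nonneg (Nat.cast_nonneg _) (hHpos n).le)
  have helb : ∀ n, ∀ i : Fin d, i ≠ L → t n * t n ≤ e n i := by
    intro n i hi
    have hk : 1 ≤ d - 1 - (i : ℕ) := by
      have h1 : (i : ℕ) < d := i.2
      have h2 : (i : ℕ) ≠ d - 1 := fun h => hi (Fin.ext h)
      omega
    rw [he]
    refine mul_le_mul_of_nonneg_left ?_ (ht0 n).le
    have : Real.exp (-(((d - 1 - (i : ℕ) : ℕ)) : ℝ) * Hs n) ≤ Real.exp (-Hs n) := by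
      apply Real.exp_le_exp.2
      rw [neg_mul, neg_le_neg_iff]
      calc Hs n = 1 * Hs n := (one_mul _).symm
        _ ≤ (((d - 1 - (i : ℕ) : ℕ)) : ℝ) * Hs n :=
            mul_le_mul_of_nonneg_right (by exact_mod_cast hk) (hHpos n).le
    exact sub_le_sub_left this 1
  -- rewrite sibuyaA
  set S : ℕ → ℝ := fun n => ∑ i : Fin d, x n (Tuple.sort (v n) i) * e n i with hS
  have key : ∀ n, sibuyaA d (Hs n) (lams n) μ u = (∏ i, u i) * Real.exp (S n) := by
    intro n
    rw [sibuyaA, hS]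
    simp only
    rw [Real.exp_sum, ← Finset.prod_mul_distrib]
    refine Finset.prod_congr rfl fun i _ => ?_
    rw [hx, hv, he]
    simp only
    rw [← Real.rpow_def_of_pos (Real.rpow_pos_of_pos (hu0 _) _)]
  -- U n
  set U : ℕ → ℝ := fun n => (∑ j, x n j) - x n (Tuple.sort (v n) L) with hU
  have hUerase : ∀ n, U n = ∑ i ∈ univ.erase L, x n (Tuple.sort (v n) i) := by
    intro n
    simp only [hU]
    have h1 : ∑ j, x n j = ∑ i : Fin d, x n (Tuple.sort (v n) i) :=
      (Equiv.sum_comp (Tuple.sort (v n)) (x n)).symm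
    rw [h1, ← Finset.sum_erase_add univ _ (mem_univ L)]
    ring
  have hSerase : ∀ n, S n = ∑ i ∈ univ.erase L, x n (Tuple.sort (v n) i) * e n i := by
    intro n
    simp only [hS]
    rw [← Finset.sum_erase_add univ _ (mem_univ L), heL, mul_zero, add_zero]
  have hlow : ∀ n, t n * t n * U n ≤ S n := by
    intro n
    rw [hSerase, hUerase, Finset.mul_sum]
    refine Finset.sum_le_sum fun i hi => ?_
    rw [mul_comm (t n * t n)]
    exact mul_le_mul_of_nonneg_left (helb n i (Finset.mem_erase.1 hi).1) (hx0 n _)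
  have hupp : ∀ n, S n ≤ U n := by
    intro n
    rw [hSerase, hUerase]
    exact Finset.sum_le_sum fun i _ => mul_le_of_le_one_right (hx0 n _) (he1 n i)
  -- limit of U
  have hUt : Tendsto U atTop (nhds ((∑ j, a j) - univ.sup' hne a)) := by
    have h1 : Tendsto (fun n => ∑ j, x n j) atTop (nhds (∑ j, a j)) :=
      tendsto_finset_sum _ fun j _ => hxt j
    have h2 : Tendsto (fun n => x n (Tuple.sort (v n) L)) atTop (nhds (univ.sup' hne a)) := by
      have := Filter.Tendsto.finset_sup'_nhds_apply (f := fun j n => x n j)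
        (g := a) (l := atTop) hne (fun j _ => hxt j)
      exact Tendsto.congr (fun n => hsup n) this
    exact h1.sub h2
  -- limit of S by squeeze
  have hSt : Tendsto S atTop (nhds ((∑ j, a j) - univ.sup' hne a)) := by
    refine tendsto_of_tendsto_of_tendsto_of_le_of_le ?_ hUt hlow hupp
    have := (htt.mul htt).mul hUt
    simpa using this
  -- conclude
  have hfinal : Tendsto (fun n => (∏ i, u i) * Real.exp (S n)) atTop
      (nhds ((∏ i, u i) * Real.exp ((∑ j, a j) - univ.sup' hne a))) :=
    ((Real.continuous_exp.tendsto _).comp hSt).const_mul _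
  have hval : (∏ i, u i) * Real.exp ((∑ j, a j) - univ.sup' hne a) = ⨅ i, u i := by
    obtain ⟨j₀, -, hj₀⟩ := Finset.exists_mem_eq_sup' hne a
    have hmin : ∀ j, u j₀ ≤ u j := by
      intro j
      have h1 : a j ≤ a j₀ := by rw [← hj₀]; exact Finset.le_sup' _ (mem_univ j)
      have h2 : Real.log (u j₀) ≤ Real.log (u j) := by
        rw [ha] at h1; simpa using neg_le_neg h1
      have := Real.exp_le_exp.2 h2
      rwa [Real.exp_log (hu0 _), Real.exp_log (hu0 _)] at this
    have hinf : (⨅ i, u i) = u j₀ :=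
      le_antisymm (ciInf_le (Finite.bddBelow_range u) j₀) (le_ciInf hmin)
    rw [hinf, hj₀, Real.exp_sub, Real.exp_sum]
    have h1 : ∀ j, Real.exp (a j) = (u j)⁻¹ := fun j => by
      rw [ha]; simp only; rw [Real.exp_neg, Real.exp_log (hu0 j)]
    rw [Finset.prod_congr rfl fun j _ => h1 j, h1 j₀, Finset.prod_inv_distrib]
    have hP : (0:ℝ) < ∏ j, u j := Finset.prod_pos fun j _ => hu0 j
    field_simp
  rw [← hval]
  exact Tendsto.congr (fun n => (key n).symm) hfinal
end

section
/- The upper tail-dependence coefficient of the bivariate Sibuya copula under assumption (A) equals min{θ_1, θ_2}: lim_{u ↑ 1} (1 − 2u + C(u, u))/(1 − u) = min{θ_1, θ_2} = (1 − e^{−H})^2 λ / (max{μ_1, μ_2} + λ(1 − e^{−H})), where C(u_1, u_2) = min{u_1^{1−θ_1} u_2, u_1 u_2^{1−θ_2}} with θ_i := (1 − e^{−H})^2 λ/λ_i. -/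
open Filter

lemma sibuya_slope_limit (θ : ℝ) :
    Tendsto (fun u : ℝ => (1 - 2 * u + u ^ (2 - θ)) / (1 - u))
      (nhdsWithin 1 (Set.Iio (1 : ℝ))) (nhds θ) := by
  set g : ℝ → ℝ := fun u => 1 - 2 * u + u ^ (2 - θ) with hgdef
  have hg : HasDerivAt g (-θ) 1 := by
    have h1 : HasDerivAt (fun u : ℝ => u ^ (2 - θ)) ((2 - θ) * (1 : ℝ) ^ (2 - θ - 1)) 1 :=
      Real.hasDerivAt_rpow_const (Or.inl one_ne_zero)
    have h2 : HasDerivAt (fun u : ℝ => 1 - 2 * u) (0 - 2 * 1) 1 :=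
      (hasDerivAt_const (1:ℝ) 1).sub ((hasDerivAt_id (1:ℝ)).const_mul 2)
    have h3 := h2.add h1
    have : (0 : ℝ) - 2 * 1 + (2 - θ) * (1 : ℝ) ^ (2 - θ - 1) = -θ := by
      rw [Real.one_rpow]; ring
    rw [this] at h3
    exact h3
  have hslope := hasDerivAt_iff_tendsto_slope.mp hg
  have hmono : nhdsWithin (1:ℝ) (Set.Iio 1) ≤ nhdsWithin (1:ℝ) {(1:ℝ)}ᶜ :=
    nhdsWithin_mono 1 (fun x hx => ne_of_lt hx)
  have h := (hslope.mono_left hmono).neg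
  rw [neg_neg] at h
  refine h.congr fun u => ?_
  have g1 : g 1 = 0 := by norm_num [hgdef, Real.one_rpow]
  rw [slope_def_field, g1, sub_zero, show (1:ℝ) - u = -(u - 1) from by ring, div_neg]

/-- The upper tail-dependence coefficient of the bivariate Sibuya copula
under assumption (A) equals `min{θ_1, θ_2}`:
`lim_{u ↑ 1} (1 − 2u + C(u, u))/(1 − u) = min{θ_1, θ_2}
  = (1 − e^{−H})^2 λ / (max{μ_1, μ_2} + λ(1 − e^{−H}))`, where
`C(u_1, u_2) = min{u_1^{1−θ_1} u_2, u_1 u_2^{1−θ_2}}` is the Marshall–Olkin copula with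
`θ_i = (1 − e^{−H})^2 λ/λ_i` and `λ_i = μ_i + λ(1 − e^{−H})`. -/
theorem sibuyaA_bivariate_upper_tail_dependence
    (H lam : ℝ) (hH : 0 < H) (hlam : 0 < lam)
    (μ₁ μ₂ : ℝ) (hμ₁ : 0 ≤ μ₁) (hμ₂ : 0 ≤ μ₂) :
    Tendsto (fun u : ℝ =>
        (1 - 2 * u +
          min (u ^ (1 - (1 - Real.exp (-H)) ^ 2 * lam / (μ₁ + lam * (1 - Real.exp (-H)))) * u)
              (u * u ^ (1 - (1 - Real.exp (-H)) ^ 2 * lam / (μ₂ + lam * (1 - Real.exp (-H))))))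
          / (1 - u))
      (nhdsWithin 1 (Set.Iio (1 : ℝ)))
      (nhds (min ((1 - Real.exp (-H)) ^ 2 * lam / (μ₁ + lam * (1 - Real.exp (-H))))
                 ((1 - Real.exp (-H)) ^ 2 * lam / (μ₂ + lam * (1 - Real.exp (-H))))))
    ∧ min ((1 - Real.exp (-H)) ^ 2 * lam / (μ₁ + lam * (1 - Real.exp (-H))))
          ((1 - Real.exp (-H)) ^ 2 * lam / (μ₂ + lam * (1 - Real.exp (-H))))
        = (1 - Real.exp (-H)) ^ 2 * lam / (max μ₁ μ₂ + lam * (1 - Real.exp (-H))) := by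
  set c : ℝ := 1 - Real.exp (-H) with hcdef
  have hc0 : 0 < c := by
    have : Real.exp (-H) < 1 := Real.exp_lt_one_iff.mpr (by linarith)
    simpa [hcdef] using this
  have hl₁ : 0 < μ₁ + lam * c := by positivity
  have hl₂ : 0 < μ₂ + lam * c := by positivity
  set θ₁ : ℝ := c ^ 2 * lam / (μ₁ + lam * c) with hθ₁def
  set θ₂ : ℝ := c ^ 2 * lam / (μ₂ + lam * c) with hθ₂def
  constructor
  · -- the limit
    refine Tendsto.congr' ?_ (sibuya_slope_limit (min θ₁ θ₂))
    have hmem : Set.Ioo (0:ℝ) 1 ∈ nhdsWithin (1:ℝ) (Set.Iio 1) :=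
      Ioo_mem_nhdsLT_of_mem (by constructor <;> norm_num)
    filter_upwards [hmem] with u hu
    have hu0 : 0 < u := hu.1
    have hu1 : u < 1 := hu.2
    have e1 : u ^ (1 - θ₁) * u = u ^ (2 - θ₁) := by
      rw [show (2:ℝ) - θ₁ = (1 - θ₁) + 1 by ring, Real.rpow_add hu0, Real.rpow_one]
    have e2 : u * u ^ (1 - θ₂) = u ^ (2 - θ₂) := by
      rw [mul_comm, show (2:ℝ) - θ₂ = (1 - θ₂) + 1 by ring, Real.rpow_add hu0, Real.rpow_one]
    have key : min (u ^ (1 - θ₁) * u) (u * u ^ (1 - θ₂)) = u ^ (2 - min θ₁ θ₂) := by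
      rw [e1, e2]
      rcases le_total θ₁ θ₂ with h | h
      · rw [min_eq_left h, min_eq_left]
        exact (Real.rpow_le_rpow_left_iff_of_base_lt_one hu0 hu1).mpr (by linarith)
      · rw [min_eq_right h, min_eq_right]
        exact (Real.rpow_le_rpow_left_iff_of_base_lt_one hu0 hu1).mpr (by linarith)
    rw [key]
  · -- the explicit formula for the min
    have ha : 0 ≤ c ^ 2 * lam := by positivity
    rcases le_total μ₁ μ₂ with h | h
    · rw [max_eq_right h, min_eq_right]
      exact div_le_div_of_nonneg_left ha hl₁ (by linarith)
    · rw [max_eq_left h, min_eq_left]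
      exact div_le_div_of_nonneg_left ha hl₂ (by linarith)
end

section
/- The lower extremal-dependence coefficient of the Sibuya copula under assumption (A) is zero: lim_{u ↓ 0} C(u, …, u) / (1 − D(u)) = 0, where D(u) := ∑_{I ⊆ {1,…,d}} (−1)^{|I|} C(u^{𝟙_I(1)}, …, u^{𝟙_I(d)}) is the diagonal of the survival copula of C obtained by inclusion–exclusion (here u^{𝟙_I(i)} equals u if i ∈ I and 1 otherwise). -/
open scoped BigOperators

open Filter Finset

private lemma rpow_sum_aux {u : ℝ} (hu : 0 < u) {α : Type*} (s : Finset α) (f : α → ℝ) :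
    u ^ (∑ i ∈ s, f i) = ∏ i ∈ s, u ^ f i := by
  classical
  induction s using Finset.cons_induction with
  | empty => simp
  | cons a s ha ih => rw [Finset.sum_cons, Finset.prod_cons, Real.rpow_add hu, ih]

private lemma sibuyaA_key (d : ℕ) (hd : 2 ≤ d) (H lam : ℝ) (hH : 0 < H) (hlam : 0 < lam)
    (μ : Fin d → ℝ) (hμ : ∀ i, 0 ≤ μ i) (I : Finset (Fin d)) (hI : I.Nonempty)
    {u : ℝ} (hu0 : 0 < u) (hu1 : u < 1) :
    ∃ E : ℝ, sibuyaA d H lam μ (fun i => if i ∈ I then u else 1) = u ^ E ∧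
      (I.card = 1 → E = 1) ∧ (2 ≤ I.card → 1 + Real.exp (-H) ≤ E) := by
  classical
  set k := I.card with hk
  have hk1 : 1 ≤ k := hI.card_pos
  have hkd : k ≤ d := by simpa using I.card_le_univ
  have he : 0 < 1 - Real.exp (-H) := by
    have : Real.exp (-H) < 1 := Real.exp_lt_one_iff.2 (by linarith)
    linarith
  set lj : Fin d → ℝ := fun j => μ j + lam * (1 - Real.exp (-H)) with hljdef
  have hlj0 : ∀ j, 0 < lj j := by
    intro j
    have h1 : 0 < lam * (1 - Real.exp (-H)) := mul_pos hlam he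
    have := hμ j
    simp only [hljdef]
    linarith
  have hljge : ∀ j, lam * (1 - Real.exp (-H)) ≤ lj j := by
    intro j; simp only [hljdef]; linarith [hμ j]
  set uf : Fin d → ℝ := fun i => if i ∈ I then u else 1 with hufdef
  set v : Fin d → ℝ := fun j => uf j ^ (-lam / lj j) with hvdef
  have hv : ∀ j, v j = if j ∈ I then u ^ (-lam / lj j) else 1 := by
    intro j
    simp only [hvdef, hufdef]
    split
    · rfl
    · exact Real.one_rpow _
  have hexpneg : ∀ j, -lam / lj j < 0 :=
    fun j => div_neg_of_neg_of_pos (neg_neg_of_pos hlam) (hlj0 j)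
  have hvI : ∀ j, 1 < v j ↔ j ∈ I := by
    intro j
    rw [hv]
    by_cases h : j ∈ I
    · rw [if_pos h]
      simp only [h, iff_true]
      rw [Real.one_lt_rpow_iff_of_pos hu0]
      exact Or.inr ⟨hu1, hexpneg j⟩
    · simp [h]
  set σ := Tuple.sort v with hσ
  have hmono : Monotone (v ∘ σ) := Tuple.monotone_sort v
  -- position lemma
  have hup : ∀ i i' : Fin d, i ≤ i' → σ i ∈ I → σ i' ∈ I := by
    intro i i' hle h
    rw [← hvI] at h ⊢
    exact lt_of_lt_of_le h (hmono hle)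
  set T : Finset (Fin d) := univ.filter (fun i => σ i ∈ I) with hT
  have hTmem : ∀ i, i ∈ T ↔ σ i ∈ I := by intro i; simp [hT]
  have hTcard : T.card = k := by
    have hTe : T = I.image σ.symm := by
      ext i
      simp only [hTmem, Finset.mem_image]
      constructor
      · intro h; exact ⟨σ i, h, by simp⟩
      · rintro ⟨j, hj, rfl⟩; simpa using hj
    rw [hTe, Finset.card_image_of_injective _ σ.symm.injective]
  have pos : ∀ i : Fin d, σ i ∈ I ↔ d - k ≤ (i : ℕ) := by
    intro i
    constructor
    · intro h
      by_contra hc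
      push_neg at hc
      have hsub : Finset.Ici i ⊆ T := by
        intro i' hi'
        rw [hTmem]
        exact hup i i' (Finset.mem_Ici.1 hi') h
      have hcard := Finset.card_le_card hsub
      rw [Fin.card_Ici, hTcard] at hcard
      have := i.isLt
      omega
    · intro h
      by_contra hc
      have hsub : T ⊆ Finset.Ioi i := by
        intro i' hi'
        rw [Finset.mem_Ioi]
        by_contra hle
        push_neg at hle
        exact hc (hup i' i hle ((hTmem i').1 hi'))
      have hcard := Finset.card_le_card hsub
      rw [Fin.card_Ioi, hTcard] at hcard
      have := i.isLt
      omega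
  -- the exponents
  set a : Fin d → ℝ := fun i =>
    (1 - Real.exp (-H)) * (1 - Real.exp (-(((d - 1 - (i : ℕ) : ℕ)) : ℝ) * H)) with ha
  set c : Fin d → ℝ := fun i => Real.exp (-(((d - 1 - (i : ℕ) : ℕ)) : ℝ) * H) with hcdef
  have hC : sibuyaA d H lam μ uf = ∏ i : Fin d, uf i * v (σ i) ^ a i := rfl
  set Tset : Finset (Fin d) := univ.filter (fun i : Fin d => d - k ≤ (i : ℕ)) with hTset
  set E : ℝ := (k : ℝ) + ∑ i ∈ Tset, (-lam / lj (σ i)) * a i with hE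
  have h1 : (∏ i : Fin d, uf i) = u ^ (k : ℝ) := by
    rw [Real.rpow_natCast]
    simp only [hufdef]
    rw [Finset.prod_ite_mem, Finset.univ_inter, Finset.prod_const]
  have h2 : (∏ i : Fin d, v (σ i) ^ a i) = u ^ (∑ i ∈ Tset, (-lam / lj (σ i)) * a i) := by
    rw [rpow_sum_aux hu0, hTset, Finset.prod_filter]
    apply Finset.prod_congr rfl
    intro i _
    split_ifs with hi
    · have hmem : σ i ∈ I := (pos i).2 hi
      rw [hv (σ i), if_pos hmem, ← Real.rpow_mul hu0.le]
    · have hmem : σ i ∉ I := fun h => hi ((pos i).1 h)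
      rw [hv (σ i), if_neg hmem, Real.one_rpow]
  refine ⟨E, ?_, ?_, ?_⟩
  · rw [hC, Finset.prod_mul_distrib, h1, h2, hE, Real.rpow_add hu0]
  · intro hkk
    have hz : ∑ i ∈ Tset, (-lam / lj (σ i)) * a i = 0 := by
      apply Finset.sum_eq_zero
      intro i hi
      have hmem : d - k ≤ (i : ℕ) := by
        simp only [hTset, Finset.mem_filter] at hi
        exact hi.2
      have hieq : d - 1 - (i : ℕ) = 0 := by
        have := i.isLt; omega
      simp [ha, hieq]
    rw [hE, hz, add_zero, hkk]
    norm_num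
  · intro hk2
    have hTscard : Tset.card = k := by
      have hTe : Tset = Finset.Ici (⟨d - k, by omega⟩ : Fin d) := by
        ext i
        simp [hTset, Finset.mem_Ici, Fin.le_def]
      rw [hTe, Fin.card_Ici]
      simp
      omega
    have hb : ∀ i ∈ Tset, -(1 - c i) ≤ (-lam / lj (σ i)) * a i := by
      intro i _
      have hc1 : c i ≤ 1 := by
        rw [hcdef]
        simp only
        rw [Real.exp_le_one_iff]
        have h0 : (0 : ℝ) ≤ ((d - 1 - (i : ℕ) : ℕ) : ℝ) := Nat.cast_nonneg _
        nlinarith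
      have hljp := hlj0 (σ i)
      have hge := hljge (σ i)
      have haeq : a i = (1 - Real.exp (-H)) * (1 - c i) := rfl
      rw [haeq, div_mul_eq_mul_div, neg_mul, neg_div, neg_le_neg_iff, div_le_iff₀ hljp]
      calc lam * ((1 - Real.exp (-H)) * (1 - c i))
          = (1 - c i) * (lam * (1 - Real.exp (-H))) := by ring
        _ ≤ (1 - c i) * lj (σ i) :=
            mul_le_mul_of_nonneg_left hge (by linarith)
        _ = (1 - c i) * lj (σ i) := rfl
    have hsumc : ∑ i ∈ Tset, -(1 - c i) = (∑ i ∈ Tset, c i) - (k : ℝ) := by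
      calc ∑ i ∈ Tset, -(1 - c i) = ∑ i ∈ Tset, (c i - 1) := by
            apply Finset.sum_congr rfl; intro i _; ring
        _ = (∑ i ∈ Tset, c i) - (Tset.card : ℝ) := by
            rw [Finset.sum_sub_distrib, Finset.sum_const, nsmul_eq_mul, mul_one]
        _ = (∑ i ∈ Tset, c i) - (k : ℝ) := by rw [hTscard]
    have hEge : (∑ i ∈ Tset, c i) ≤ E := by
      have hss := Finset.sum_le_sum hb
      rw [hsumc] at hss
      rw [hE]
      linarith
    have hd1 : d - 1 < d := by omega
    have hd2 : d - 2 < d := by omega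
    set i1 : Fin d := ⟨d - 1, hd1⟩ with hi1def
    set i2 : Fin d := ⟨d - 2, hd2⟩ with hi2def
    have hne : i1 ≠ i2 := by
      simp only [hi1def, hi2def, Ne, Fin.mk.injEq]
      omega
    have hm1 : i1 ∈ Tset := by simp [hTset, hi1def]; omega
    have hm2 : i2 ∈ Tset := by simp [hTset, hi2def]; omega
    have hpair : ({i1, i2} : Finset (Fin d)) ⊆ Tset := by
      intro x hx
      simp only [Finset.mem_insert, Finset.mem_singleton] at hx
      rcases hx with rfl | rfl
      · exact hm1
      · exact hm2
    have hc1v : c i1 = 1 := by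
      have : d - 1 - (d - 1) = 0 := by omega
      simp [hcdef, hi1def, this]
    have hc2v : c i2 = Real.exp (-H) := by
      have : d - 1 - (d - 2) = 1 := by omega
      simp [hcdef, hi2def, this]
    have hps : ∑ i ∈ ({i1, i2} : Finset (Fin d)), c i = c i1 + c i2 :=
      Finset.sum_pair hne
    have hle : c i1 + c i2 ≤ ∑ i ∈ Tset, c i := by
      rw [← hps]
      exact Finset.sum_le_sum_of_subset_of_nonneg hpair
        (fun i _ _ => (Real.exp_pos _).le)
    rw [hc1v, hc2v] at hle
    linarith

private lemma sibuyaA_empty (d : ℕ) (H lam : ℝ) (μ : Fin d → ℝ) (u : ℝ) :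
    sibuyaA d H lam μ (fun i => if i ∈ (∅ : Finset (Fin d)) then u else 1) = 1 := by
  simp [sibuyaA, Real.one_rpow]

/-- The diagonal `D(u) = Ĉ(1−u, …, 1−u)` of the survival copula of the Sibuya copula `C`
under assumption (A), obtained by inclusion–exclusion:
`D(u) = ∑_{I ⊆ {1,…,d}} (−1)^{|I|} C(u^{𝟙_I(1)}, …, u^{𝟙_I(d)})`, where `u^{𝟙_I(i)}`
equals `u` if `i ∈ I` and `1` otherwise. -/
noncomputable def sibuyaASurvDiag (d : ℕ) (H lam : ℝ) (μ : Fin d → ℝ) (u : ℝ) : ℝ :=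
  ∑ I : Finset (Fin d),
    (-1 : ℝ) ^ I.card * sibuyaA d H lam μ (fun i => if i ∈ I then u else 1)

private lemma sibuyaA_div_bound (d : ℕ) (hd : 2 ≤ d) (H lam : ℝ) (hH : 0 < H)
    (hlam : 0 < lam) (μ : Fin d → ℝ) (hμ : ∀ i, 0 ≤ μ i) (I : Finset (Fin d))
    (hI2 : 2 ≤ I.card) {u : ℝ} (hu0 : 0 < u) (hu1 : u < 1) :
    0 ≤ sibuyaA d H lam μ (fun i => if i ∈ I then u else 1) / u ∧
    sibuyaA d H lam μ (fun i => if i ∈ I then u else 1) / u ≤ u ^ Real.exp (-H) := by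
  have hI : I.Nonempty := Finset.card_pos.1 (by omega)
  obtain ⟨E, hCE, -, hE2⟩ := sibuyaA_key d hd H lam hH hlam μ hμ I hI hu0 hu1
  have hEb := hE2 hI2
  constructor
  · rw [hCE]
    exact div_nonneg (Real.rpow_nonneg hu0.le _) hu0.le
  · rw [hCE, div_le_iff₀ hu0]
    calc u ^ E ≤ u ^ (1 + Real.exp (-H)) :=
        Real.rpow_le_rpow_of_exponent_ge hu0 hu1.le hEb
      _ = u ^ Real.exp (-H) * u := by
        rw [Real.rpow_add hu0, Real.rpow_one]; ring

/-- The lower extremal-dependence coefficient of the Sibuya copula under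
assumption (A) is zero: `lim_{u ↓ 0} C(u, …, u) / (1 − D(u)) = 0`. -/
theorem sibuyaA_lower_extremal_dependence_zero
    (d : ℕ) (hd : 2 ≤ d) (H lam : ℝ) (hH : 0 < H) (hlam : 0 < lam)
    (μ : Fin d → ℝ) (hμ : ∀ i, 0 ≤ μ i) :
    Tendsto (fun u : ℝ =>
        sibuyaA d H lam μ (fun _ => u) / (1 - sibuyaASurvDiag d H lam μ u))
      (nhdsWithin 0 (Set.Ioi (0 : ℝ))) (nhds 0) := by
  classical
  set F := nhdsWithin (0 : ℝ) (Set.Ioi (0 : ℝ)) with hF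
  have hIoo : ∀ᶠ u in F, u ∈ Set.Ioo (0 : ℝ) 1 :=
    Ioo_mem_nhdsGT_of_mem ⟨le_refl 0, one_pos⟩
  have hpow : Tendsto (fun u : ℝ => u ^ Real.exp (-H)) F (nhds 0) := by
    have hc : ContinuousAt (fun u : ℝ => u ^ Real.exp (-H)) 0 :=
      Real.continuousAt_rpow_const 0 _ (Or.inr (Real.exp_pos _).le)
    have ht := hc.tendsto
    rw [Real.zero_rpow (Real.exp_pos (-H)).ne'] at ht
    exact ht.mono_left nhdsWithin_le_nhds
  -- numerator
  have hNum : Tendsto (fun u : ℝ => sibuyaA d H lam μ (fun _ => u) / u) F (nhds 0) := by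
    apply squeeze_zero_norm' ?_ hpow
    filter_upwards [hIoo] with u hu
    have huniv : (fun i : Fin d => if i ∈ (Finset.univ : Finset (Fin d)) then u else 1)
        = fun _ : Fin d => u := by funext i; simp
    have hcard : 2 ≤ (Finset.univ : Finset (Fin d)).card := by
      simpa using hd
    obtain ⟨h0, h1⟩ := sibuyaA_div_bound d hd H lam hH hlam μ hμ Finset.univ hcard hu.1 hu.2
    rw [huniv] at h0 h1
    rw [Real.norm_of_nonneg h0]
    exact h1
  -- denominator
  have hDen : Tendsto (fun u : ℝ => (1 - sibuyaASurvDiag d H lam μ u) / u) F (nhds d) := by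
    have hrepr : ∀ u ∈ Set.Ioo (0 : ℝ) 1, (1 - sibuyaASurvDiag d H lam μ u) / u
        = ∑ I : Finset (Fin d),
            ((if I = ∅ then (1 : ℝ) else 0)
              - (-1 : ℝ) ^ I.card * sibuyaA d H lam μ (fun i => if i ∈ I then u else 1)) / u := by
      intro u _
      rw [← Finset.sum_div]
      congr 1
      rw [Finset.sum_sub_distrib, sibuyaASurvDiag]
      congr 1
      simp
    have hsum1 : (∑ I : Finset (Fin d), (if I.card = 1 then (1 : ℝ) else 0)) = d := by
      rw [Finset.sum_boole]
      have hfe : (Finset.univ.filter (fun I : Finset (Fin d) => I.card = 1))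
          = Finset.powersetCard 1 Finset.univ := by
        ext J; simp [Finset.mem_powersetCard]
      rw [hfe, Finset.card_powersetCard]
      simp
    have hlim : Tendsto (fun u : ℝ => ∑ I : Finset (Fin d),
        ((if I = ∅ then (1 : ℝ) else 0)
          - (-1 : ℝ) ^ I.card * sibuyaA d H lam μ (fun i => if i ∈ I then u else 1)) / u)
        F (nhds (∑ I : Finset (Fin d), (if I.card = 1 then (1 : ℝ) else 0))) := by
      apply tendsto_finset_sum
      intro I _
      by_cases hIe : I = ∅
      · subst hIe
        have hzz : (fun u : ℝ =>
            ((if (∅ : Finset (Fin d)) = ∅ then (1 : ℝ) else 0)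
              - (-1 : ℝ) ^ (∅ : Finset (Fin d)).card
                * sibuyaA d H lam μ (fun i => if i ∈ (∅ : Finset (Fin d)) then u else 1)) / u)
            = fun _ : ℝ => 0 := by
          funext u
          rw [sibuyaA_empty]
          simp
        rw [hzz]
        simp only [Finset.card_empty]
        norm_num
      · have hne : I.Nonempty := Finset.nonempty_iff_ne_empty.2 hIe
        by_cases h1 : I.card = 1
        · rw [if_pos h1]
          refine Tendsto.congr' ?_
            (tendsto_const_nhds : Tendsto (fun _ : ℝ => (1 : ℝ)) F (nhds 1))
          filter_upwards [hIoo] with u hu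
          obtain ⟨E, hCE, hE1, -⟩ := sibuyaA_key d hd H lam hH hlam μ hμ I hne hu.1 hu.2
          rw [hE1 h1, Real.rpow_one] at hCE
          rw [hCE, if_neg hIe, h1]
          rw [show (0 : ℝ) - (-1) ^ 1 * u = u by ring, div_self hu.1.ne']
        · have h2 : 2 ≤ I.card := by
            have := hne.card_pos; omega
          rw [if_neg h1]
          apply squeeze_zero_norm' ?_ hpow
          filter_upwards [hIoo] with u hu
          obtain ⟨h0, hb⟩ := sibuyaA_div_bound d hd H lam hH hlam μ hμ I h2 hu.1 hu.2
          rw [if_neg hIe, Real.norm_eq_abs, zero_sub, neg_div, abs_neg, mul_div_assoc,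
            abs_mul, abs_pow, abs_neg, abs_one, one_pow, one_mul,
            abs_of_nonneg h0]
          exact hb
    rw [hsum1] at hlim
    refine Tendsto.congr' ?_ hlim
    filter_upwards [hIoo] with u hu
    exact (hrepr u hu).symm
  have hdc : ((d : ℝ)) ≠ 0 := by
    have : (0:ℝ) < d := by exact_mod_cast Nat.lt_of_lt_of_le (by norm_num) hd
    exact this.ne'
  have hdiv := hNum.div hDen hdc
  rw [zero_div] at hdiv
  refine Tendsto.congr' ?_ hdiv
  filter_upwards [hIoo] with u hu
  simp only [Pi.div_apply]
  rw [div_div_div_cancel_right₀ hu.1.ne']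
end

section
/- Let R ∈ [0,1), r ≥ 0, β > 0, λ̃ > 0, and T > 0, and suppose r + βλ̃ > 0. Define the first-to-default present value FTD_T(s) := (1 − R)(1 − e^{−rT} e^{−βλ̃T}) − ((1 − R)r + s) ∫_0^T e^{−βλ̃ t} e^{−rt} dt. Then FTD_T(s) = 0 if and only if s = (1 − R)·β·λ̃; in particular the fair spread s* = (1 − R)βλ̃ does not depend on T or r. -/
/-- Let `R ∈ [0,1)`, `r ≥ 0`, `β > 0`, `λ̃ > 0`, `T > 0` with
`r + βλ̃ > 0`.  The first-to-default present value
`FTD_T(s) = (1 − R)(1 − e^{−rT} e^{−βλ̃T}) − ((1 − R)r + s) ∫_0^T e^{−βλ̃t} e^{−rt} dt`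
vanishes if and only if `s = (1 − R)βλ̃`; in particular the fair spread
`s* = (1 − R)βλ̃` depends neither on `T` nor on `r`. -/
theorem ftd_fair_spread
    (R r β lamTilde T s : ℝ)
    (hR0 : 0 ≤ R) (hR1 : R < 1) (hr : 0 ≤ r) (hβ : 0 < β) (hlam : 0 < lamTilde)
    (hT : 0 < T) (hsum : 0 < r + β * lamTilde) :
    (1 - R) * (1 - Real.exp (-r * T) * Real.exp (-β * lamTilde * T))
        - ((1 - R) * r + s) *
          ∫ t in (0 : ℝ)..T, Real.exp (-β * lamTilde * t) * Real.exp (-r * t) = 0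
      ↔ s = (1 - R) * β * lamTilde := by
  set c : ℝ := r + β * lamTilde with hc
  clear_value c
  have hc0 : c ≠ 0 := ne_of_gt hsum
  have hfun : ∀ t : ℝ, Real.exp (-β * lamTilde * t) * Real.exp (-r * t)
      = Real.exp (-c * t) := by
    intro t
    rw [← Real.exp_add]
    congr 1
    rw [hc]; ring
  have hint : (∫ t in (0 : ℝ)..T, Real.exp (-β * lamTilde * t) * Real.exp (-r * t))
      = (1 - Real.exp (-c * T)) / c := by
    simp only [hfun]
    have h1 : (∫ t in (0 : ℝ)..T, Real.exp (-c * t))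
        = (-c)⁻¹ • ∫ t in (-c * 0 : ℝ)..(-c * T), Real.exp t := by
      rw [← intervalIntegral.integral_comp_mul_left (fun x => Real.exp x)
        (neg_ne_zero.mpr hc0)]
    rw [h1, integral_exp, smul_eq_mul]
    rw [mul_zero, Real.exp_zero, eq_div_iff hc0]
    linear_combination (1 - Real.exp (-c * T)) * mul_inv_cancel₀ hc0
  have hE : Real.exp (-r * T) * Real.exp (-β * lamTilde * T) = Real.exp (-c * T) := by
    rw [← Real.exp_add]
    congr 1
    rw [hc]; ring
  rw [hint, hE]
  have hElt : Real.exp (-c * T) < 1 := by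
    rw [Real.exp_lt_one_iff]
    nlinarith
  have hpos : 0 < 1 - Real.exp (-c * T) := by linarith
  constructor
  · intro h
    have h2 : ((1 - R) * c - ((1 - R) * r + s)) * (1 - Real.exp (-c * T)) = 0 := by
      field_simp at h
      rw [show (-(c*T)) = -c*T from by ring] at h
      linear_combination h
    have h3 : (1 - R) * c - ((1 - R) * r + s) = 0 := by
      rcases mul_eq_zero.mp h2 with h' | h'
      · exact h'
      · linarith
    rw [hc] at h3; nlinarith
  · intro h
    rw [h, hc]
    field_simp
    ring
end
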